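/- Let n ≥ 1 and let a, b, c ∈ ℤ_n, and let P(x,y) = a + b·x + c·y. Then (ℤ_n, P) is a quasigroup satisfying the external medial (paramedial) law P(P(w,x), P(y,z)) = P(P(z,x), P(y,w)) for all w, x, y, z ∈ ℤ_n if and only if b² = c² in ℤ_n and both b and c are units of ℤ_n. -/

import Mathlib

/-- For `P(x,y) = a + b*x + c*y` over `ℤ_n` (`n ≥ 1`), `(ℤ_n, P)` is an external
medial quasigroup iff `b² = c²` and both `b` and `c` are units. -/
theorem stmt_6 (n : ℕ) (hn : 1 ≤ n) (a b c : ZMod n) :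
    ((∀ u : ZMod n, Function.Bijective (fun x : ZMod n => a + b * x + c * u) ∧
        Function.Bijective (fun y : ZMod n => a + b * u + c * y)) ∧
      (∀ w x y z : ZMod n,
        a + b * (a + b * w + c * x) + c * (a + b * y + c * z) =
          a + b * (a + b * z + c * x) + c * (a + b * y + c * w))) ↔
    (b ^ 2 = c ^ 2 ∧ IsUnit b ∧ IsUnit c) := by
  constructor
  · rintro ⟨h1, h2⟩
    refine ⟨by linear_combination h2 1 0 0 0, ?_, ?_⟩
    · obtain ⟨x, hx⟩ := (h1 0).1.2 (a + 1)
      simp only at hx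
      exact IsUnit.of_mul_eq_one (a := b) x (by linear_combination hx)
    · obtain ⟨y, hy⟩ := (h1 0).2.2 (a + b * 0 + 1)
      simp only at hy
      exact IsUnit.of_mul_eq_one (a := c) y (by linear_combination hy)
  · rintro ⟨hbc, hb, hc⟩
    refine ⟨fun u => ⟨⟨?_, ?_⟩, ⟨?_, ?_⟩⟩, fun w x y z => by linear_combination (w - z) * hbc⟩
    · intro x y hxy
      simp only at hxy
      exact hb.mul_left_cancel (by linear_combination hxy)
    · intro t
      exact ⟨↑hb.unit⁻¹ * (t - a - c * u), by
        simp only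
        linear_combination (t - a - c * u) * hb.mul_val_inv⟩
    · intro x y hxy
      simp only at hxy
      exact hc.mul_left_cancel (by linear_combination hxy)
    · intro t
      exact ⟨↑hc.unit⁻¹ * (t - a - b * u), by
        simp only
        linear_combination (t - a - b * u) * hc.mul_val_inv⟩
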